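/- Let (R,M) be a discrete valuation domain with finite residue field and quotient field K. (1) For every a ∈ M with a ≠ 0 and every b ∈ R∖M, the linear polynomial a·x − b is absolutely irreducible in Int(R). (2) Conversely, if F ∈ Int(R) is absolutely irreducible, splits into linear factors over K, and has at least one root lying in K∖R, then F is associated in Int(R) to a polynomial a·x − b with a ∈ M and b ∈ R∖M; in particular F has degree 1. -/

import Mathlib

open Polynomial

section Defs

variable (R K : Type*)

/-- `Int(R) = {F ∈ K[x] ∣ F(R) ⊆ R}`, the ring of integer-valued polynomials,
as a subring of `K[x]`. -/
def intPoly [CommRing R] [CommRing K] [Algebra R K] : Subring (Polynomial K) where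
  carrier := {F | ∀ r : R, ∃ a : R, F.eval (algebraMap R K r) = algebraMap R K a}
  mul_mem' := by
    rintro f g hf hg r
    obtain ⟨a, ha⟩ := hf r
    obtain ⟨b, hb⟩ := hg r
    exact ⟨a * b, by simp [ha, hb]⟩
  one_mem' := fun r => ⟨1, by simp⟩
  add_mem' := by
    rintro f g hf hg r
    obtain ⟨a, ha⟩ := hf r
    obtain ⟨b, hb⟩ := hg r
    exact ⟨a + b, by simp [ha, hb]⟩
  zero_mem' := fun r => ⟨0, by simp⟩
  neg_mem' := by
    rintro f hf r
    obtain ⟨a, ha⟩ := hf r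
    exact ⟨-a, by simp [ha]⟩

/-- Polynomials with coefficients in `R` are integer-valued. -/
theorem map_mem_intPoly [CommRing R] [CommRing K] [Algebra R K] (f : Polynomial R) :
    f.map (algebraMap R K) ∈ intPoly R K :=
  fun r => ⟨f.eval r, by rw [Polynomial.eval_map, Polynomial.eval₂_at_apply]⟩

/-- An element `d` of a commutative monoid is absolutely irreducible if it is irreducible
and, for every `n ≥ 1`, the only factorization of `d ^ n` into irreducibles is, up to order
and unit factors, `d ⋯ d` (`n` copies). -/
def AbsolutelyIrreducible {α : Type*} [CommMonoid α] (d : α) : Prop :=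
  Irreducible d ∧ ∀ n : ℕ, 1 ≤ n → ∀ l : Multiset α, (∀ a ∈ l, Irreducible a) →
    l.prod = d ^ n → Multiset.card l = n ∧ ∀ a ∈ l, Associated a d

/-- The fixed divisor of a polynomial `f ∈ R[x]`: the ideal of `R` generated by the
values of `f` on `R`. -/
def fixDiv [CommRing R] (f : Polynomial R) : Ideal R :=
  Ideal.span (Set.range fun a => f.eval a)

/-- The fixed divisor of an integer-valued polynomial `F ∈ Int(R)`: the ideal of `R`
generated by (the elements of `R` representing) the values of `F` on `R`. -/
def fixDivK [CommRing R] [CommRing K] [Algebra R K] (F : Polynomial K) : Ideal R :=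
  Ideal.span {a : R | ∃ r : R, F.eval (algebraMap R K r) = algebraMap R K a}

/-- The (normalized additive) valuation of a nonzero element of a discrete valuation
ring: the largest `n` such that `x ∈ M ^ n`, where `M` is the maximal ideal. -/
noncomputable def mval [CommRing R] [IsLocalRing R] (x : R) : ℕ :=
  sSup {n : ℕ | x ∈ IsLocalRing.maximalIdeal R ^ n}

open scoped Classical in
/-- The valuation `v : R → ℕ∞`, with `v 0 = ⊤`. -/
noncomputable def vR [CommRing R] [IsLocalRing R] (x : R) : ℕ∞ :=
  if x = 0 then ⊤ else (mval R x : ℕ∞)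

open scoped Classical in
/-- The valuation extended to the quotient field `K`, with `v 0 = ⊤`. -/
noncomputable def vK [CommRing R] [IsLocalRing R] [CommRing K] [Algebra R K]
    [IsLocalization (nonZeroDivisors R) K] (x : K) : WithTop ℤ :=
  if x = 0 then ⊤
  else (((mval R (IsLocalization.sec (nonZeroDivisors R) x).1 : ℤ) -
        (mval R ((IsLocalization.sec (nonZeroDivisors R) x).2 : R) : ℤ) : ℤ) : WithTop ℤ)

/-- The residue class `s + M ^ n` of `s` modulo the `n`-th power of the maximal ideal. -/
def resClass [CommRing R] [IsLocalRing R] (s : R) (n : ℕ) : Set R :=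
  {x | x - s ∈ IsLocalRing.maximalIdeal R ^ n}

/-- A finite set `S ⊆ R` is balanced if, letting `n s` for each `s ∈ S` be the minimal
non-negative integer with `(s + M ^ (n s)) ∩ S = {s}`, the residue classes `s + M ^ (n s)`
(`s ∈ S`) are pairwise disjoint and cover `R`. -/
def IsBalanced [CommRing R] [IsLocalRing R] (S : Finset R) : Prop :=
  S.Nonempty ∧
  ∃ n : R → ℕ,
    (∀ s ∈ S, resClass R s (n s) ∩ (S : Set R) = {s} ∧
      ∀ k : ℕ, resClass R s k ∩ (S : Set R) = {s} → n s ≤ k) ∧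
    (∀ s ∈ S, ∀ t ∈ S, s ≠ t → Disjoint (resClass R s (n s)) (resClass R t (n t))) ∧
    (⋃ s ∈ S, resClass R s (n s)) = Set.univ

/-- `ρ` describes the `M`-adic partition `C_S` associated to `S`: the partition of `R`
into the residue classes `s + M ^ (ρ s)`, `s ∈ S`, such that each block contains both a
residue class of `M ^ (ρ s + 1)` intersecting `S` and one disjoint from `S`. -/
def IsSPartition [CommRing R] [IsLocalRing R] (S : Finset R) (ρ : R → ℕ) : Prop :=
  (⋃ s ∈ S, resClass R s (ρ s)) = Set.univ ∧
  (∀ s ∈ S, ∀ t ∈ S,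
    resClass R s (ρ s) = resClass R t (ρ t) ∨
      Disjoint (resClass R s (ρ s)) (resClass R t (ρ t))) ∧
  (∀ s ∈ S,
    (∃ u : R, resClass R u (ρ s + 1) ⊆ resClass R s (ρ s) ∧
      (resClass R u (ρ s + 1) ∩ (S : Set R)).Nonempty) ∧
    (∃ u : R, resClass R u (ρ s + 1) ⊆ resClass R s (ρ s) ∧
      resClass R u (ρ s + 1) ∩ (S : Set R) = ∅))

/-- `S'` is a balanced set associated to `S` (relative to the partition data `ρ` of `C_S`):
`S' ⊆ S` is balanced, consists of one representative per block of `C_S`, and its associated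
partition `C_{S'}` coincides with `C_S`. -/
def IsAssociatedBalancedSubset [CommRing R] [IsLocalRing R] (S S' : Finset R) (ρ : R → ℕ) :
    Prop :=
  S' ⊆ S ∧ IsBalanced R S' ∧
  (∀ s ∈ S', ∀ t ∈ S', s ≠ t → Disjoint (resClass R s (ρ s)) (resClass R t (ρ t))) ∧
  (⋃ s ∈ S', resClass R s (ρ s)) = Set.univ

open scoped Classical in
/-- The partition matrix of the partition `{s + M ^ (ρ s) : s ∈ S}`: diagonal entries
`ρ s`, off-diagonal entries `v (s - t)`. -/
noncomputable def partitionMatrix [CommRing R] [IsLocalRing R] (S : Finset R) (ρ : R → ℕ) :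
    Matrix {x // x ∈ S} {x // x ∈ S} ℤ :=
  Matrix.of fun s t =>
    if (s : R) = (t : R) then (ρ (s : R) : ℤ) else (mval R ((s : R) - (t : R)) : ℤ)

/-- `m` is the vector of multiplicities of the equalizing polynomial of `S`: the unique
vector of positive integers with gcd `1` such that `A · m = e · (1, …, 1)ᵀ` for some
non-negative integer `e`, where `A` is the partition matrix. -/
def IsEqualizingVector [CommRing R] [IsLocalRing R] (S : Finset R) (ρ : R → ℕ) (m : R → ℕ) :
    Prop :=
  (∀ s ∈ S, 0 < m s) ∧ S.gcd m = 1 ∧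
  ∃ e : ℕ, ∀ s : {x // x ∈ S},
    (∑ t : {x // x ∈ S}, partitionMatrix R S ρ s t * (m (t : R) : ℤ)) = (e : ℤ)

/-- `f` is the equalizing polynomial of `S`. -/
def IsEqualizingPoly [CommRing R] [IsLocalRing R] (S : Finset R) (f : Polynomial R) : Prop :=
  ∃ (ρ : R → ℕ) (m : R → ℕ), IsSPartition R S ρ ∧ IsEqualizingVector R S ρ m ∧
    f = ∏ s ∈ S, (Polynomial.X - Polynomial.C s) ^ m s

/-- The posh set of `f ∈ R[x]`: the set of `r ∈ R` where `v (f r)` exceeds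
`min_{t ∈ R} v (f t)`. -/
noncomputable def poshR [CommRing R] [IsLocalRing R] (f : Polynomial R) : Set R :=
  {r : R | (⨅ t : R, vR R (f.eval t)) < vR R (f.eval r)}

/-- The posh set of `F ∈ K[x]`: the set of `r ∈ R` where `v (F r)` exceeds
`min_{t ∈ R} v (F t)`. -/
def poshK [CommRing R] [IsLocalRing R] [CommRing K] [Algebra R K]
    [IsLocalization (nonZeroDivisors R) K] (F : Polynomial K) : Set R :=
  {r : R | ∃ t : R, vK R K (F.eval (algebraMap R K t)) < vK R K (F.eval (algebraMap R K r))}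

/-- `r` lies in an `S`-poor neighborhood of the partition `C_S` (described by `ρ`):
a residue class `r + M ^ (ρ s + 1)` disjoint from `S` inside a block `s + M ^ (ρ s)`. -/
def IsPoorElt [CommRing R] [IsLocalRing R] (S : Finset R) (ρ : R → ℕ) (r : R) : Prop :=
  ∃ s ∈ S, r ∈ resClass R s (ρ s) ∧ resClass R r (ρ s + 1) ∩ (S : Set R) = ∅

/-- The rich set of `S`: the union of the `S`-rich neighborhoods `s + M ^ (ρ s + 1)`,
`s ∈ S`. -/
def richSet [CommRing R] [IsLocalRing R] (S : Finset R) (ρ : R → ℕ) : Set R :=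
  ⋃ s ∈ S, resClass R s (ρ s + 1)

/-- `a` is an `M`-ordering (`P`-ordering) of `R`. -/
def IsMOrdering [CommRing R] [IsLocalRing R] (a : ℕ → R) : Prop :=
  ∀ k : ℕ, ∀ x : R,
    vR R (∏ i ∈ Finset.range k, (a k - a i)) ≤ vR R (∏ i ∈ Finset.range k, (x - a i))

end Defs


section Aux

open IsLocalRing

variable {R K : Type*} [CommRing R] [IsDomain R] [IsDiscreteValuationRing R]
  [Field K] [Algebra R K] [IsFractionRing R K]

theorem aux_eval (f : Polynomial R) (r : R) :
    (f.map (algebraMap R K)).eval (algebraMap R K r) = algebraMap R K (f.eval r) := by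
  rw [Polynomial.eval_map, Polynomial.eval₂_at_apply]

theorem aux_unit {a b : R} (ha : a ∈ maximalIdeal R) (hb : b ∉ maximalIdeal R) (r : R) :
    IsUnit (a * r - b) := by
  by_contra h
  apply hb
  have h1 : a * r - b ∈ maximalIdeal R := (mem_maximalIdeal _).2 h
  have h2 : a * r ∈ maximalIdeal R := Ideal.mul_mem_right _ _ ha
  simpa using sub_mem h2 h1

theorem aux_const {x : Polynomial K} (hx : x ∈ intPoly R K) {c : K} (h : x = Polynomial.C c) :
    ∃ d : R, c = algebraMap R K d := by
  obtain ⟨d, hd⟩ := hx 0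
  rw [h, Polynomial.eval_C] at hd
  exact ⟨d, hd⟩

theorem aux_isUnit_iff (x : intPoly R K) :
    IsUnit x ↔ ∃ c : Rˣ, (x : Polynomial K) = Polynomial.C (algebraMap R K (c : R)) := by
  constructor
  · rintro ⟨u, rfl⟩
    have hmul : ((u : intPoly R K) : Polynomial K) * (((u⁻¹ : _ˣ) : intPoly R K) : Polynomial K)
        = 1 := by
      rw [← Subring.coe_mul, u.mul_inv, Subring.coe_one]
    obtain ⟨c, hcu, hc⟩ := Polynomial.isUnit_iff.mp (IsUnit.of_mul_eq_one _ hmul)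
    have hcne : c ≠ 0 := hcu.ne_zero
    have hinv : (((u⁻¹ : _ˣ) : intPoly R K) : Polynomial K) = Polynomial.C c⁻¹ := by
      apply mul_left_cancel₀ (show (Polynomial.C c : Polynomial K) ≠ 0 by
        simpa using hcne)
      rw [← Polynomial.C_mul, mul_inv_cancel₀ hcne, Polynomial.C_1, hc, hmul]
    obtain ⟨d, hd⟩ := aux_const (u : intPoly R K).2 hc.symm
    obtain ⟨e, he⟩ := aux_const ((u⁻¹ : _ˣ) : intPoly R K).2 hinv
    have hde : d * e = 1 := by
      apply IsFractionRing.injective R K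
      rw [map_mul, map_one, ← hd, ← he, mul_inv_cancel₀ hcne]
    exact ⟨Units.mkOfMulEqOne d e hde, by rw [← hc, hd]; rfl⟩
  · rintro ⟨c, hc⟩
    refine IsUnit.of_mul_eq_one (a := x)
      ⟨Polynomial.C (algebraMap R K ((c⁻¹ : Rˣ) : R)), fun r => ⟨(c⁻¹ : Rˣ), by simp⟩⟩ ?_
    apply Subtype.ext
    show (x : Polynomial K) * _ = 1
    rw [hc, ← Polynomial.C_mul, ← map_mul, Units.mul_inv, map_one, Polynomial.C_1]

theorem aux_gmap (a b : R) :
    (Polynomial.C a * Polynomial.X - Polynomial.C b).map (algebraMap R K)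
      = Polynomial.C (algebraMap R K a) * Polynomial.X - Polynomial.C (algebraMap R K b) := by
  simp

theorem aux_gdeg {a : R} (ha : a ≠ 0) (b : R) :
    ((Polynomial.C a * Polynomial.X - Polynomial.C b).map (algebraMap R K)).degree = 1 := by
  rw [aux_gmap, sub_eq_add_neg, ← Polynomial.C_neg]
  exact Polynomial.degree_linear
    ((map_ne_zero_iff _ (IsFractionRing.injective R K)).mpr ha)

theorem aux_nonunit {x : intPoly R K} (h : (x : Polynomial K).degree = 1) : ¬ IsUnit x := by
  intro hu
  obtain ⟨c, hc⟩ := (aux_isUnit_iff x).mp hu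
  rw [hc] at h
  have := Polynomial.degree_C_le (a := algebraMap R K (c : R)) (R := K)
  rw [h] at this
  norm_num at this

theorem aux_constdvd {a b : R} (ha : a ∈ maximalIdeal R) (hb : b ∉ maximalIdeal R) {n : ℕ}
    {x : intPoly R K} {c : K} (hc : (x : Polynomial K) = Polynomial.C c)
    (hdvd : x ∣ (⟨(Polynomial.C a * Polynomial.X - Polynomial.C b).map (algebraMap R K),
      map_mem_intPoly R K _⟩ : intPoly R K) ^ n) :
    IsUnit x := by
  obtain ⟨w, hw⟩ := hdvd
  obtain ⟨d, hd⟩ := (w : intPoly R K).2 0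
  obtain ⟨e, he⟩ := aux_const x.2 hc
  have hval : (((⟨(Polynomial.C a * Polynomial.X - Polynomial.C b).map (algebraMap R K),
      map_mem_intPoly R K _⟩ : intPoly R K) ^ n : intPoly R K) : Polynomial K)
      = ((Polynomial.C a * Polynomial.X - Polynomial.C b).map (algebraMap R K)) ^ n :=
    SubmonoidClass.coe_pow _ n
  have h1 := congrArg (fun p => Polynomial.eval (algebraMap R K (0 : R)) p)
    (congrArg (Subtype.val) hw)
  simp only [hval, Subring.coe_mul, hc] at h1
  rw [Polynomial.eval_pow, aux_eval, Polynomial.eval_mul, Polynomial.eval_C, hd, he,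
    ← map_pow, ← map_mul] at h1
  have hed : (Polynomial.eval (0 : R) (Polynomial.C a * Polynomial.X - Polynomial.C b)) ^ n
      = e * d := IsFractionRing.injective R K h1
  have hu0 : IsUnit (Polynomial.eval (0 : R) (Polynomial.C a * Polynomial.X - Polynomial.C b)) :=
    by simpa using aux_unit ha hb 0
  have hu : IsUnit (e * d) := hed ▸ hu0.pow n
  have hue : IsUnit e := isUnit_of_mul_isUnit_left hu
  exact (aux_isUnit_iff x).mpr ⟨hue.unit, by rw [hc, he, IsUnit.unit_spec]⟩




theorem aux_girr {a : R} (ha0 : a ≠ 0) (b : R) :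
    Irreducible ((Polynomial.C a * Polynomial.X - Polynomial.C b).map (algebraMap R K)) := by
  set A := algebraMap R K a with hA
  set B := algebraMap R K b with hB
  have hAne : A ≠ 0 := (map_ne_zero_iff _ (IsFractionRing.injective R K)).mpr ha0
  have key : Polynomial.C A * (Polynomial.X - Polynomial.C (B / A))
      = (Polynomial.C a * Polynomial.X - Polynomial.C b).map (algebraMap R K) := by
    rw [aux_gmap, mul_sub, ← Polynomial.C_mul, mul_div_cancel₀ _ hAne]
  have : Associated (Polynomial.X - Polynomial.C (B / A))
      ((Polynomial.C a * Polynomial.X - Polynomial.C b).map (algebraMap R K)) := by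
    refine ⟨(Polynomial.isUnit_C.mpr hAne.isUnit).unit, ?_⟩
    rw [IsUnit.unit_spec, mul_comm, key]
  exact this.irreducible (Polynomial.irreducible_X_sub_C _)

theorem aux_assoc {a b : R} (ha : a ∈ IsLocalRing.maximalIdeal R) (ha0 : a ≠ 0)
    (hb : b ∉ IsLocalRing.maximalIdeal R) {n : ℕ} (x : intPoly R K)
    (hirr : Irreducible x)
    (hdvd : x ∣ (⟨(Polynomial.C a * Polynomial.X - Polynomial.C b).map (algebraMap R K),
      map_mem_intPoly R K _⟩ : intPoly R K) ^ n) :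
    Associated x (⟨(Polynomial.C a * Polynomial.X - Polynomial.C b).map (algebraMap R K),
      map_mem_intPoly R K _⟩ : intPoly R K) := by
  set g : Polynomial K := (Polynomial.C a * Polynomial.X - Polynomial.C b).map (algebraMap R K)
    with hg
  set f : intPoly R K := ⟨g, map_mem_intPoly R K _⟩ with hf
  -- x.val divides g ^ n in K[X]
  have hdvdK : (x : Polynomial K) ∣ g ^ n := by
    obtain ⟨w, hw⟩ := hdvd
    refine ⟨(w : Polynomial K), ?_⟩
    have := congrArg (Subtype.val) hw
    rw [SubmonoidClass.coe_pow, Subring.coe_mul] at this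
    exact this
  have hgprime : Prime g := (aux_girr ha0 b).prime
  obtain ⟨i, hin, hass⟩ := (dvd_prime_pow hgprime n).mp hdvdK
  obtain ⟨u, hu⟩ := hass.symm
  obtain ⟨c, hcu, hcv⟩ := Polynomial.isUnit_iff.mp u.isUnit
  have hxval : (x : Polynomial K) = Polynomial.C c * g ^ i := by
    rw [hcv, mul_comm]; exact hu.symm
  -- the constant c is in the image of R
  obtain ⟨d, hd⟩ := x.2 0
  have hu0 : IsUnit (Polynomial.eval (0 : R) (Polynomial.C a * Polynomial.X - Polynomial.C b)) :=
    by simpa using aux_unit ha hb 0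
  set v : Rˣ := hu0.unit with hv
  have hveq : (v : R) = Polynomial.eval (0 : R) (Polynomial.C a * Polynomial.X - Polynomial.C b) :=
    hu0.unit_spec
  have hgev : g.eval (algebraMap R K (0 : R)) = algebraMap R K ((v : R)) := by
    rw [hg, aux_eval, hveq]
  have hc0 : c * (algebraMap R K ((v : R))) ^ i = algebraMap R K d := by
    rw [← hgev, ← hd, hxval, Polynomial.eval_mul, Polynomial.eval_pow, Polynomial.eval_C]
  have hvinv : algebraMap R K ((v : R)) * algebraMap R K (((v⁻¹ : Rˣ) : R)) = 1 := by
    rw [← map_mul, Units.mul_inv, map_one]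
  have hce : c = algebraMap R K (d * ((v⁻¹ : Rˣ) : R) ^ i) := by
    have : c = c * ((algebraMap R K ((v : R))) * algebraMap R K (((v⁻¹ : Rˣ) : R))) ^ i := by
      rw [hvinv, one_pow, mul_one]
    rw [this, mul_pow, ← mul_assoc, hc0, map_mul, map_pow]
  set e : R := d * ((v⁻¹ : Rˣ) : R) ^ i with he
  -- auxiliary membership facts
  have hgi_mem : ∀ j : ℕ, g ^ j ∈ intPoly R K := by
    intro j
    have := map_mem_intPoly R K ((Polynomial.C a * Polynomial.X - Polynomial.C b) ^ j)
    rwa [Polynomial.map_pow] at this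
  have hCe_mem : ∀ e' : R, (Polynomial.C (algebraMap R K e') : Polynomial K) ∈ intPoly R K := by
    intro e' r
    exact ⟨e', by rw [Polynomial.eval_C]⟩
  have hgdeg : g.degree = 1 := aux_gdeg ha0 b
  have hgne : g ≠ 0 := fun h => by rw [h] at hgdeg; simp at hgdeg
  -- i ≥ 1
  have hipos : 1 ≤ i := by
    by_contra hi
    have hi0 : i = 0 := by omega
    have hconst : (x : Polynomial K) = Polynomial.C c := by rw [hxval, hi0, pow_zero, mul_one]
    exact hirr.not_isUnit (aux_constdvd ha hb hconst hdvd)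
  -- e is a unit
  have heu : IsUnit e := by
    by_contra hne
    have hsplit : x = (⟨Polynomial.C (algebraMap R K e), hCe_mem e⟩ : intPoly R K)
        * (⟨g ^ i, hgi_mem i⟩ : intPoly R K) := by
      apply Subtype.ext
      rw [Subring.coe_mul]
      show (x : Polynomial K) = Polynomial.C (algebraMap R K e) * g ^ i
      rw [hxval, hce]
    rcases hirr.isUnit_or_isUnit hsplit with h | h
    · obtain ⟨c', hc'⟩ := (aux_isUnit_iff _).mp h
      have : algebraMap R K e = algebraMap R K ((c' : R)) := by
        have := hc'
        simp only [Polynomial.C_inj] at this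
        exact this
      have : e = (c' : R) := IsFractionRing.injective R K this
      exact hne (this ▸ c'.isUnit)
    · obtain ⟨c', hc'⟩ := (aux_isUnit_iff _).mp h
      have hdg : (g ^ i).degree = i := by
        rw [Polynomial.degree_pow, hgdeg]; simp
      rw [show ((⟨g ^ i, hgi_mem i⟩ : intPoly R K) : Polynomial K) = g ^ i from rfl] at hc'
      rw [hc'] at hdg
      have hle := Polynomial.degree_C_le (a := algebraMap R K ((c' : R))) (R := K)
      rw [hdg] at hle
      have : (i : WithBot ℕ) ≤ 0 := hle
      norm_cast at this
      omega
  have hene : algebraMap R K e ≠ 0 := fun h => by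
    have : e = 0 := IsFractionRing.injective R K (by simpa using h)
    exact heu.ne_zero this
  -- i = 1
  have hi1 : i = 1 := by
    by_contra hi
    have hi2 : 2 ≤ i := by omega
    have hmem2 : Polynomial.C (algebraMap R K e) * g ^ (i - 1) ∈ intPoly R K :=
      (intPoly R K).mul_mem (hCe_mem e) (hgi_mem (i - 1))
    have hsplit : x = f * (⟨Polynomial.C (algebraMap R K e) * g ^ (i - 1), hmem2⟩ : intPoly R K)
        := by
      apply Subtype.ext
      rw [Subring.coe_mul]
      show (x : Polynomial K) = g * (Polynomial.C (algebraMap R K e) * g ^ (i - 1))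
      rw [hxval, hce]
      have hpow : g * (Polynomial.C (algebraMap R K e) * g ^ (i - 1))
          = Polynomial.C (algebraMap R K e) * g ^ (i - 1 + 1) := by rw [pow_succ]; ring
      rw [hpow, show i - 1 + 1 = i by omega]
    rcases hirr.isUnit_or_isUnit hsplit with h | h
    · exact aux_nonunit hgdeg h
    · obtain ⟨c', hc'⟩ := (aux_isUnit_iff _).mp h
      have hdg : (Polynomial.C (algebraMap R K e) * g ^ (i - 1)).degree = (i - 1 : ℕ) := by
        rw [Polynomial.degree_mul, Polynomial.degree_pow, hgdeg, Polynomial.degree_C hene]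
        simp
      have hc'' : Polynomial.C (algebraMap R K e) * g ^ (i - 1)
          = Polynomial.C (algebraMap R K ((c' : R))) := hc'
      rw [hc''] at hdg
      have hle := Polynomial.degree_C_le (a := algebraMap R K ((c' : R))) (R := K)
      rw [hdg] at hle
      have : ((i - 1 : ℕ) : WithBot ℕ) ≤ 0 := hle
      norm_cast at this
      omega
  -- conclude
  have hunit : IsUnit (⟨Polynomial.C (algebraMap R K e), hCe_mem e⟩ : intPoly R K) :=
    (aux_isUnit_iff _).mpr ⟨heu.unit, by rw [heu.unit_spec]⟩
  have hxf : x = f * (⟨Polynomial.C (algebraMap R K e), hCe_mem e⟩ : intPoly R K) := by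
    apply Subtype.ext
    rw [Subring.coe_mul]
    show (x : Polynomial K) = g * Polynomial.C (algebraMap R K e)
    rw [hxval, hce, hi1, pow_one, mul_comm]
  rw [hxf]
  exact associated_mul_unit_left f _ hunit

theorem aux_deg_of_assoc {a b : R} {x : intPoly R K}
    (h : Associated x (⟨(Polynomial.C a * Polynomial.X - Polynomial.C b).map (algebraMap R K),
      map_mem_intPoly R K _⟩ : intPoly R K))
    (hgdeg : ((Polynomial.C a * Polynomial.X - Polynomial.C b).map (algebraMap R K)).degree = 1) :
    (x : Polynomial K).degree = 1 := by
  obtain ⟨u, hu⟩ := h.symm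
  obtain ⟨c, hc⟩ := (aux_isUnit_iff ((u : intPoly R K) : intPoly R K)).mp u.isUnit
  have hval := congrArg (Subtype.val) hu
  rw [Subring.coe_mul, hc] at hval
  have hne : (algebraMap R K ((c : R))) ≠ 0 :=
    fun hh => c.ne_zero (IsFractionRing.injective R K (by simpa using hh))
  rw [← hval, Polynomial.degree_mul, hgdeg, Polynomial.degree_C hne]
  exact add_zero _



end Aux

/-- (1) For `a ∈ M`, `a ≠ 0` and `b ∈ R ∖ M`, the polynomial `a·x - b`
is absolutely irreducible in `Int(R)`. (2) Every absolutely irreducible `F ∈ Int(R)`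
which splits over `K` and has a root in `K ∖ R` is associated in `Int(R)` to such a
polynomial `a·x - b` with `a ∈ M`, `b ∈ R ∖ M`; in particular `F` has degree `1`. -/
theorem statement3 (R K : Type*) [CommRing R] [IsDomain R] [IsDiscreteValuationRing R]
    [Finite (IsLocalRing.ResidueField R)]
    [Field K] [Algebra R K] [IsFractionRing R K] :
    (∀ a b : R, a ∈ IsLocalRing.maximalIdeal R → a ≠ 0 →
      b ∉ IsLocalRing.maximalIdeal R →
      AbsolutelyIrreducible
        (⟨(Polynomial.C a * Polynomial.X - Polynomial.C b).map (algebraMap R K),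
          map_mem_intPoly R K _⟩ : intPoly R K)) ∧
    (∀ (F : Polynomial K) (hF : F ∈ intPoly R K),
      AbsolutelyIrreducible (⟨F, hF⟩ : intPoly R K) →
      Polynomial.Splits F →
      (∃ z : K, F.IsRoot z ∧ z ∉ Set.range (algebraMap R K)) →
      (∃ a b : R, a ∈ IsLocalRing.maximalIdeal R ∧ b ∉ IsLocalRing.maximalIdeal R ∧
        Associated (⟨F, hF⟩ : intPoly R K)
          ⟨(Polynomial.C a * Polynomial.X - Polynomial.C b).map (algebraMap R K),
            map_mem_intPoly R K _⟩) ∧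
      F.degree = 1) := by
  
  constructor
  · -- Part (1)
    intro a b ha ha0 hb
    set g : Polynomial K := (Polynomial.C a * Polynomial.X - Polynomial.C b).map (algebraMap R K)
      with hgdef
    set f : intPoly R K := ⟨g, map_mem_intPoly R K _⟩ with hfdef
    have hgdeg : g.degree = 1 := aux_gdeg ha0 b
    have hgne : g ≠ 0 := fun h => by rw [h] at hgdeg; simp at hgdeg
    have hirr : Irreducible f := by
      constructor
      · exact aux_nonunit hgdeg
      · intro p q hpq
        have hval : g = (p : Polynomial K) * (q : Polynomial K) := by
          have := congrArg Subtype.val hpq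
          rwa [Subring.coe_mul] at this
        have hpne : (p : Polynomial K) ≠ 0 := fun h => hgne (by rw [hval, h, zero_mul])
        have hqne : (q : Polynomial K) ≠ 0 := fun h => hgne (by rw [hval, h, mul_zero])
        have hnat : (p : Polynomial K).natDegree + (q : Polynomial K).natDegree = 1 := by
          rw [← Polynomial.natDegree_mul hpne hqne, ← hval]
          exact Polynomial.natDegree_eq_of_degree_eq_some hgdeg
        have hpdvd : p ∣ f ^ 1 := by rw [pow_one, hpq]; exact Dvd.intro _ rfl
        have hqdvd : q ∣ f ^ 1 := by rw [pow_one, hpq]; exact Dvd.intro_left _ rfl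
        rcases (show (p : Polynomial K).natDegree = 0 ∨ (q : Polynomial K).natDegree = 0
            by omega) with h | h
        · obtain ⟨c, hc⟩ := Polynomial.natDegree_eq_zero.mp h
          exact Or.inl (aux_constdvd ha hb hc.symm hpdvd)
        · obtain ⟨c, hc⟩ := Polynomial.natDegree_eq_zero.mp h
          exact Or.inr (aux_constdvd ha hb hc.symm hqdvd)
    refine ⟨hirr, ?_⟩
    intro n hn l hl hprod
    have hassoc : ∀ x ∈ l, Associated x f := fun x hx =>
      aux_assoc ha ha0 hb x (hl x hx) (hprod ▸ Multiset.dvd_prod hx)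
    refine ⟨?_, hassoc⟩
    have hdeg1 : ∀ y ∈ l, ((y : intPoly R K) : Polynomial K).natDegree = 1 := fun y hy =>
      Polynomial.natDegree_eq_of_degree_eq_some (aux_deg_of_assoc (hassoc y hy) hgdeg)
    have hcoe : (l.map (fun y : intPoly R K => (y : Polynomial K))).prod = g ^ n := by
      calc (l.map (fun y : intPoly R K => (y : Polynomial K))).prod
          = ((intPoly R K).subtype l.prod : Polynomial K) :=
            (map_multiset_prod ((intPoly R K).subtype) l).symm
        _ = g ^ n := by
            rw [show (intPoly R K).subtype l.prod = (l.prod : Polynomial K) from rfl, hprod]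
            exact SubmonoidClass.coe_pow _ n
    have h0 : (0 : Polynomial K) ∉ l.map (fun y : intPoly R K => (y : Polynomial K)) := by
      intro h
      obtain ⟨y, hy, hy0⟩ := Multiset.mem_map.mp h
      have hd := aux_deg_of_assoc (hassoc y hy) hgdeg
      rw [hy0] at hd
      simp at hd
    have hnd := Polynomial.natDegree_multiset_prod _ h0
    rw [hcoe, Polynomial.natDegree_pow,
      Polynomial.natDegree_eq_of_degree_eq_some (n := 1) hgdeg, Multiset.map_map] at hnd
    have hrep : l.map (Polynomial.natDegree ∘ fun y : intPoly R K => (y : Polynomial K))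
        = Multiset.replicate (Multiset.card l) 1 := by
      rw [Multiset.eq_replicate]
      refine ⟨by simp, ?_⟩
      intro m hm
      obtain ⟨y, hy, rfl⟩ := Multiset.mem_map.mp hm
      exact hdeg1 y hy
    rw [hrep, Multiset.sum_replicate] at hnd
    simp at hnd
    omega
  · -- Part (2)
    intro F hF habs hsplits hroot
    obtain ⟨z, hzroot, hznotin⟩ := hroot
    have hz0 : z ≠ 0 := fun h => hznotin ⟨0, by rw [map_zero, h]⟩
    have hinj := IsFractionRing.injective R K
    obtain ⟨⟨b', a'⟩, hsec⟩ := IsLocalization.surj (nonZeroDivisors R) z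
    simp only at hsec
    have ha'0 : (a' : R) ≠ 0 := nonZeroDivisors.ne_zero a'.2
    have hA' : algebraMap R K ((a' : R)) ≠ 0 := (map_ne_zero_iff _ hinj).mpr ha'0
    have hb'0 : b' ≠ 0 := by
      intro h
      apply hz0
      have h1 : z * algebraMap R K (a' : R) = 0 := by rw [hsec, h, map_zero]
      exact (mul_eq_zero.mp h1).resolve_right hA'
    obtain ⟨π, hπ⟩ := IsDiscreteValuationRing.exists_irreducible R
    obtain ⟨i, u, hu⟩ := IsDiscreteValuationRing.eq_unit_mul_pow_irreducible ha'0 hπ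
    obtain ⟨j, w, hw⟩ := IsDiscreteValuationRing.eq_unit_mul_pow_irreducible hb'0 hπ
    have hπ0 : π ≠ 0 := hπ.ne_zero
    have hπK : algebraMap R K π ≠ 0 := (map_ne_zero_iff _ hinj).mpr hπ0
    have huK : algebraMap R K ((u : R)) ≠ 0 :=
      (map_ne_zero_iff _ hinj).mpr (Units.ne_zero u)
    have hsec' : z * (algebraMap R K ((u : R)) * algebraMap R K π ^ i)
        = algebraMap R K ((w : R)) * algebraMap R K π ^ j := by
      have h1 := hsec
      rw [hu, hw, map_mul, map_mul, map_pow, map_pow] at h1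
      exact h1
    have hji : j < i := by
      by_contra hcon
      push_neg at hcon
      apply hznotin
      refine ⟨((u⁻¹ : Rˣ) : R) * ((w : R) * π ^ (j - i)), ?_⟩
      apply mul_left_cancel₀ huK
      rw [← map_mul]
      have huu : (u : R) * (((u⁻¹ : Rˣ) : R) * ((w : R) * π ^ (j - i)))
          = (w : R) * π ^ (j - i) := by
        rw [← mul_assoc, Units.mul_inv, one_mul]
      rw [huu, map_mul, map_pow]
      apply mul_right_cancel₀ (pow_ne_zero i hπK)
      rw [mul_assoc, ← pow_add, Nat.sub_add_cancel hcon, ← hsec']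
      ring
    set a₀ : R := (u : R) * π ^ (i - j) with ha₀def
    set b₀ : R := (w : R) with hb₀def
    have hA : a₀ ∈ IsLocalRing.maximalIdeal R := by
      apply Ideal.mul_mem_left
      have hπM : π ∈ IsLocalRing.maximalIdeal R :=
        (IsLocalRing.mem_maximalIdeal _).mpr hπ.not_isUnit
      have : i - j = (i - j - 1) + 1 := by omega
      rw [this, pow_succ]
      exact Ideal.mul_mem_left _ _ hπM
    have hB : b₀ ∉ IsLocalRing.maximalIdeal R :=
      IsLocalRing.notMem_maximalIdeal.mpr w.isUnit
    have ha₀0 : a₀ ≠ 0 := mul_ne_zero (Units.ne_zero u) (pow_ne_zero _ hπ0)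
    have hA0 : algebraMap R K a₀ ≠ 0 := (map_ne_zero_iff _ hinj).mpr ha₀0
    have hkey : algebraMap R K a₀ * z = algebraMap R K b₀ := by
      rw [ha₀def, map_mul, map_pow]
      apply mul_right_cancel₀ (pow_ne_zero j hπK)
      calc algebraMap R K ((u : R)) * algebraMap R K π ^ (i - j) * z * algebraMap R K π ^ j
          = z * (algebraMap R K ((u : R)) * algebraMap R K π ^ i) := by
            conv_rhs => rw [show (i : ℕ) = (i - j) + j from (Nat.sub_add_cancel hji.le).symm]
            rw [pow_add]; ring
        _ = algebraMap R K ((w : R)) * algebraMap R K π ^ j := hsec'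
    set g : Polynomial K := (Polynomial.C a₀ * Polynomial.X - Polynomial.C b₀).map
      (algebraMap R K) with hgdef
    have hgdeg : g.degree = 1 := aux_gdeg ha₀0 b₀
    have hgfact : g = Polynomial.C (algebraMap R K a₀) * (Polynomial.X - Polynomial.C z) := by
      rw [hgdef, aux_gmap, mul_sub, ← Polynomial.C_mul, hkey]
    obtain ⟨Q, hQ⟩ := Polynomial.dvd_iff_isRoot.mpr hzroot
    set H : Polynomial K := Polynomial.C (algebraMap R K a₀)⁻¹ * Q with hHdef
    have hCC : Polynomial.C (algebraMap R K a₀) * Polynomial.C (algebraMap R K a₀)⁻¹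
        = (1 : Polynomial K) := by
      rw [← Polynomial.C_mul, mul_inv_cancel₀ hA0, Polynomial.C_1]
    have hFgH : F = g * H := by
      rw [hQ, hgfact, hHdef, mul_mul_mul_comm, hCC, one_mul]
    have hHmem : H ∈ intPoly R K := by
      intro r
      obtain ⟨d, hd⟩ := hF r
      have hunit : IsUnit (a₀ * r - b₀) := aux_unit hA hB r
      set vr : Rˣ := hunit.unit with hvrdef
      have hvr : (vr : R) = a₀ * r - b₀ := hunit.unit_spec
      have hvrK : algebraMap R K ((vr : R)) ≠ 0 :=
        (map_ne_zero_iff _ hinj).mpr (Units.ne_zero vr)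
      have hgev : g.eval (algebraMap R K r) = algebraMap R K ((vr : R)) := by
        rw [hgdef, aux_eval, hvr]
        simp
      refine ⟨d * ((vr⁻¹ : Rˣ) : R), ?_⟩
      apply mul_left_cancel₀ hvrK
      have h2 : algebraMap R K ((vr : R)) * H.eval (algebraMap R K r) = algebraMap R K d := by
        rw [← hgev, ← Polynomial.eval_mul, ← hFgH, hd]
      rw [h2, ← map_mul]
      congr 1
      rw [mul_comm d, ← mul_assoc, Units.mul_inv, one_mul]
    have hsplit : (⟨F, hF⟩ : intPoly R K)
        = (⟨g, map_mem_intPoly R K _⟩ : intPoly R K) * (⟨H, hHmem⟩ : intPoly R K) := by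
      apply Subtype.ext
      rw [Subring.coe_mul]
      exact hFgH
    rcases habs.1.isUnit_or_isUnit hsplit with h | h
    · exact absurd h (aux_nonunit hgdeg)
    · have hass : Associated (⟨F, hF⟩ : intPoly R K)
          (⟨g, map_mem_intPoly R K _⟩ : intPoly R K) := by
        rw [hsplit]
        exact associated_mul_unit_left _ _ h
      exact ⟨⟨a₀, b₀, hA, hB, hass⟩, aux_deg_of_assoc hass hgdeg⟩
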